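/- Let n = 2^k with k ≥ 1. Then there exists an integer a with 0 ≤ a ≤ n such that |VT_a(n) ∩ S_n(k+1)| ≥ 2^{n−1} / (n + 1); in particular the redundancy of this run-length-limited VT-code is at most log₂(n+1) + 1 bits. -/

import Mathlib

/-- The `b`-burst-deletion ball of `x`: all vectors obtained from `x` by deleting
`b` consecutive coordinates. -/
def delBall (b : ℕ) {n : ℕ} (x : Fin n → Bool) : Set (Fin (n - b) → Bool) :=
  { y | ∃ i ≤ n - b, ∀ j : Fin (n - b),
      y j = if (j : ℕ) < i
        then x ⟨(j : ℕ), by have := j.isLt; omega⟩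
        else x ⟨(j : ℕ) + b, by have := j.isLt; omega⟩ }

/-- The `b`-burst-insertion ball of `x`: all vectors `v` of length `n + b`
such that `x` is obtained from `v` by deleting `b` consecutive coordinates. -/
def insBall (b : ℕ) {n : ℕ} (x : Fin n → Bool) : Set (Fin (n + b) → Bool) :=
  { v | ∃ i ≤ n, ∀ j : Fin n,
      x j = if (j : ℕ) < i
        then v ⟨(j : ℕ), by have := j.isLt; omega⟩
        else v ⟨(j : ℕ) + b, by have := j.isLt; omega⟩ }

/-- Number of runs (maximal blocks of consecutive equal coordinates) of a binary vector. -/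
def numRuns {m : ℕ} (z : Fin m → Bool) : ℕ :=
  (Finset.univ.filter (fun i : Fin m =>
    (i : ℕ) = 0 ∨ z i ≠ z ⟨(i : ℕ) - 1, by have := i.isLt; omega⟩)).card

/-- Every run of `z` has length at most `f`: every window of `f + 1` consecutive
coordinates contains two different values. -/
def maxRunLe {m : ℕ} (f : ℕ) (z : Fin m → Bool) : Prop :=
  ∀ i : ℕ, ∀ hi : i + f < m, ∃ j : ℕ, ∃ hj : j ≤ f,
    z ⟨i + j, by omega⟩ ≠ z ⟨i, by omega⟩

/-- The Varshamov–Tenengolts code `VT_a(n)`. -/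
def VT (n a : ℕ) : Set (Fin n → Bool) :=
  { x | (∑ i : Fin n, ((i : ℕ) + 1) * (x i).toNat) ≡ a [MOD n + 1] }

/-- The shifted Varshamov–Tenengolts code `SVT_{c,d}(n,P)`. -/
def SVT (n P c d : ℕ) : Set (Fin n → Bool) :=
  { x | (∑ i : Fin n, ((i : ℕ) + 1) * (x i).toNat) ≡ c [MOD P] ∧
        (∑ i : Fin n, (x i).toNat) ≡ d [MOD 2] }

/-- The `(2,1)`-burst-correcting code `C_{2,1}(n,a,c)`. -/
def C21 (n a c : ℕ) : Set (Fin n → Bool) :=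
  { x | (∑ i : Fin n, (x i).toNat) ≡ c [MOD 4] ∧
        (∑ i : Fin n, ((i : ℕ) + 1) * (x i).toNat) ≡ a [MOD 2 * n - 1] }

/-- Row `r` (0-indexed) of the `b × (n / b)` array `A_b(x)`: the entry in
column `j` (0-indexed) is `x (j * b + r)`. -/
def arrRow {n : ℕ} (b : ℕ) (x : Fin n → Bool) (r : Fin b) : Fin (n / b) → Bool :=
  fun j => x ⟨(j : ℕ) * b + (r : ℕ), by
    have hj : (j : ℕ) + 1 ≤ n / b := j.isLt
    have hr := r.isLt
    have h1 : ((j : ℕ) + 1) * b ≤ n / b * b := Nat.mul_le_mul_right b hj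
    have h2 : n / b * b ≤ n := Nat.div_mul_le_self n b
    have h3 : ((j : ℕ) + 1) * b = (j : ℕ) * b + b := by ring
    omega⟩

/-- Non-consecutive burst deletion ball: all vectors obtained from `x` by deleting
`a` coordinates whose positions all lie within a window of `b` consecutive positions. -/
def ncDelBall (a b : ℕ) {n : ℕ} (x : Fin n → Bool) : Set (Fin (n - a) → Bool) :=
  { y | ∃ f : Fin (n - a) → Fin n, StrictMono f ∧ (∀ j, y j = x (f j)) ∧
      ∃ i : ℕ, ∀ p : Fin n, p ∉ Set.range f → i ≤ (p : ℕ) ∧ (p : ℕ) < i + b }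

/-- Non-consecutive burst insertion ball: all vectors `v` of length `n + a` from which
`x` is obtained by a non-consecutive deletion burst of `a` deletions within a window
of `b` consecutive positions. -/
def ncInsBall (a b : ℕ) {n : ℕ} (x : Fin n → Bool) : Set (Fin (n + a) → Bool) :=
  { v | ∃ f : Fin n → Fin (n + a), StrictMono f ∧ (∀ j, x j = v (f j)) ∧
      ∃ i : ℕ, ∀ p : Fin (n + a), p ∉ Set.range f → i ≤ (p : ℕ) ∧ (p : ℕ) < i + b }

/-- The vector obtained from `x` by deleting the coordinate at (0-indexed) position `k`. -/
def delOne {n : ℕ} (x : Fin n → Bool) (k : ℕ) : Fin (n - 1) → Bool :=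
  fun j => if (j : ℕ) < k
    then x ⟨(j : ℕ), by have := j.isLt; omega⟩
    else x ⟨(j : ℕ) + 1, by have := j.isLt; omega⟩

/-- The `(2,1)`-burst ball of `x`: all results of deleting two adjacent coordinates
of `x` and inserting one bit at the same position. -/
def d21Ball {n : ℕ} (x : Fin n → Bool) : Set (Fin (n - 1) → Bool) :=
  { y | ∃ i : ℕ, ∃ hi : i + 1 < n, ∃ a : Bool,
      ∀ j : Fin (n - 1), y j =
        if (j : ℕ) < i then x ⟨(j : ℕ), by have := j.isLt; omega⟩
        else if (j : ℕ) = i then a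
        else x ⟨(j : ℕ) + 1, by have := j.isLt; omega⟩ }

open Finset Classical

lemma aux_piFinset_card (n i F : ℕ) (h : i + F < n) :
    (Fintype.piFinset (fun p : Fin n =>
      if i < (p:ℕ) ∧ (p:ℕ) ≤ i + F then ({false}:Finset Bool) else Finset.univ)).card
    = 2 ^ (n - F) := by
  rw [Fintype.card_piFinset]
  have h1 : ∀ p : Fin n,
      (if i < (p:ℕ) ∧ (p:ℕ) ≤ i + F then ({false}:Finset Bool) else Finset.univ).card
      = if i < (p:ℕ) ∧ (p:ℕ) ≤ i + F then 1 else 2 := by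
    intro p; split <;> simp
  simp_rw [h1]
  rw [Fin.prod_univ_eq_prod_range (fun m => if i < m ∧ m ≤ i + F then 1 else 2)]
  rw [Finset.prod_ite]
  simp only [Finset.prod_const_one, Finset.prod_const, one_mul]
  congr 1
  have h2 : (Finset.range n).filter (fun m => ¬(i < m ∧ m ≤ i + F))
      = Finset.range n \ Finset.Ioc i (i + F) := by
    ext m
    simp only [Finset.mem_filter, Finset.mem_range, Finset.mem_Ioc, Finset.mem_sdiff]
  rw [h2, Finset.card_sdiff_of_subset (fun m hm => by
    simp only [Finset.mem_Ioc] at hm; simp only [Finset.mem_range]; omega)]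
  rw [Finset.card_range, Nat.card_Ioc]
  omega

open Classical in
noncomputable def BadSet (n F i : ℕ) : Finset (Fin n → Bool) :=
  Finset.univ.filter (fun z => ∀ j ≤ F, ∀ (h1 : i + j < n) (h2 : i < n),
    z ⟨i + j, h1⟩ = z ⟨i, h2⟩)

lemma badSet_card (n F i : ℕ) (h : i + F < n) :
    (BadSet n F i).card ≤ 2 ^ (n - F) := by
  classical
  rw [← aux_piFinset_card n i F h]
  refine Finset.card_le_card_of_injOn
    (fun z p => if i < (p:ℕ) ∧ (p:ℕ) ≤ i + F then false else z p) ?_ ?_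
  · intro z hz
    simp only [Finset.mem_coe, Fintype.mem_piFinset]
    intro p
    split <;> simp
  · intro z1 h1 z2 h2 heq
    simp only [BadSet, Finset.coe_filter, Set.mem_setOf_eq] at h1 h2
    have hieq : z1 ⟨i, by omega⟩ = z2 ⟨i, by omega⟩ := by
      have := congrFun heq (⟨i, by omega⟩ : Fin n)
      simpa using this
    funext p
    by_cases hp : i < (p:ℕ) ∧ (p:ℕ) ≤ i + F
    · have hval : (p : ℕ) = i + ((p:ℕ) - i) := by omega
      have e1 : z1 p = z1 ⟨i, by omega⟩ := by
        have := h1.2 ((p:ℕ) - i) (by omega) (by omega) (by omega)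
        rw [← this]; congr 1; exact Fin.ext hval
      have e2 : z2 p = z2 ⟨i, by omega⟩ := by
        have := h2.2 ((p:ℕ) - i) (by omega) (by omega) (by omega)
        rw [← this]; congr 1; exact Fin.ext hval
      rw [e1, e2, hieq]
    · have := congrFun heq p
      simpa [hp] using this

lemma bad_total (n F : ℕ) (hF : 0 < F) :
    (Finset.univ.filter (fun z : Fin n → Bool => ¬ maxRunLe F z)).card
      ≤ (n - F) * 2 ^ (n - F) := by
  classical
  have hsub : (Finset.univ.filter (fun z : Fin n → Bool => ¬ maxRunLe F z))
      ⊆ (Finset.range (n - F)).biUnion (fun i => BadSet n F i) := by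
    intro z hz
    simp only [Finset.mem_filter, Finset.mem_univ, true_and] at hz
    rw [maxRunLe] at hz
    push_neg at hz
    obtain ⟨i, hi, hall⟩ := hz
    refine Finset.mem_biUnion.2 ⟨i, Finset.mem_range.2 (by omega), ?_⟩
    simp only [BadSet, Finset.mem_filter, Finset.mem_univ, true_and]
    intro j hj h1 h2
    exact hall j hj
  calc (Finset.univ.filter (fun z : Fin n → Bool => ¬ maxRunLe F z)).card
      ≤ ((Finset.range (n - F)).biUnion (fun i => BadSet n F i)).card :=
        Finset.card_le_card hsub
    _ ≤ ∑ i ∈ Finset.range (n - F), (BadSet n F i).card := Finset.card_biUnion_le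
    _ ≤ ∑ i ∈ Finset.range (n - F), 2 ^ (n - F) := by
        apply Finset.sum_le_sum
        intro i hi
        exact badSet_card n F i (by simp at hi; omega)
    _ = (n - F) * 2 ^ (n - F) := by simp [Finset.sum_const, Finset.card_range, mul_comm]


/-- for `n = 2^k`, `k ≥ 1`, there exists `0 ≤ a ≤ n` with
`|VT_a(n) ∩ S_n(k+1)| ≥ 2^{n−1}/(n+1)`, i.e., the redundancy of this run-length-limited
VT-code is at most `log₂(n+1) + 1` bits. -/
theorem exists_RLL_VT_code_large (k : ℕ) (hk : 1 ≤ k) (n : ℕ) (hn : n = 2 ^ k) :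
    ∃ a ≤ n, ((Set.ncard { x : Fin n → Bool | x ∈ VT n a ∧ maxRunLe (k + 1) x } : ℝ))
      ≥ (2 : ℝ) ^ (n - 1) / ((n : ℝ) + 1) := by
  classical
  have hkn : k + 1 ≤ n := by
    have := Nat.lt_two_pow_self (n := k); omega
  have hn2 : 2 ≤ n := by
    have : 2 ^ 1 ≤ 2 ^ k := Nat.pow_le_pow_right (by norm_num) hk
    omega
  set F := k + 1 with hF
  set S : Finset (Fin n → Bool) := Finset.univ.filter (fun z => maxRunLe F z) with hS
  have hcardU : (Finset.univ : Finset (Fin n → Bool)).card = 2 ^ n := by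
    simp [Finset.card_univ]
  have hsplit := Finset.card_filter_add_card_filter_not
    (s := (Finset.univ : Finset (Fin n → Bool))) (p := fun z => maxRunLe F z)
  rw [hcardU] at hsplit
  have hbad := bad_total n F (by omega)
  have hbound : (n - F) * 2 ^ (n - F) ≤ 2 ^ (n - 1) := by
    have h1 : n - F ≤ 2 ^ k := by omega
    calc (n - F) * 2 ^ (n - F) ≤ 2 ^ k * 2 ^ (n - F) := Nat.mul_le_mul_right _ h1
      _ = 2 ^ (k + (n - F)) := (pow_add 2 k (n - F)).symm
      _ ≤ 2 ^ (n - 1) := Nat.pow_le_pow_right (by norm_num) (by omega)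
  have hsum : S.card + (Finset.univ.filter fun z : Fin n → Bool => ¬ maxRunLe F z).card
      = 2 ^ n := by
    rw [hS, ← hcardU]
    exact Finset.card_filter_add_card_filter_not (p := fun z => maxRunLe F z)
  have hShalf : 2 ^ (n - 1) ≤ S.card := by
    have h2n : 2 ^ (n - 1) + 2 ^ (n - 1) = 2 ^ n := by
      rw [← two_mul, ← pow_succ']
      congr 1; omega
    omega
  -- pigeonhole over residues
  set σ : (Fin n → Bool) → ℕ :=
    fun x => (∑ i : Fin n, ((i : ℕ) + 1) * (x i).toNat) % (n + 1) with hσ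
  have hmaps : ∀ x ∈ S, σ x ∈ Finset.range (n + 1) := fun x _ =>
    Finset.mem_range.2 (Nat.mod_lt _ (by omega))
  have hfib := Finset.card_eq_sum_card_fiberwise hmaps
  have hpig : ∃ a ∈ Finset.range (n + 1),
      S.card ≤ (n + 1) * (S.filter fun x => σ x = a).card := by
    refine Finset.exists_le_of_sum_le ⟨0, by simp⟩ ?_
    rw [Finset.sum_const, Finset.card_range, ← Finset.mul_sum, ← hfib]
    simp [smul_eq_mul, mul_comm]
  obtain ⟨a, haT, hle⟩ := hpig
  have ha : a < n + 1 := Finset.mem_range.1 haT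
  refine ⟨a, by omega, ?_⟩
  have hset : { x : Fin n → Bool | x ∈ VT n a ∧ maxRunLe (k + 1) x }
      = ↑(S.filter fun x => σ x = a) := by
    ext x
    simp only [Set.mem_setOf_eq, Finset.coe_filter, hS, Finset.mem_filter,
      Finset.mem_univ, true_and, VT, Nat.ModEq, hσ, Nat.mod_eq_of_lt ha]
    tauto
  rw [hset, Set.ncard_coe_finset]
  rw [ge_iff_le, div_le_iff₀ (by positivity)]
  have hchain : (2 : ℕ) ^ (n - 1) ≤ (n + 1) * (S.filter fun x => σ x = a).card :=
    le_trans hShalf hle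
  have hcast : (2 : ℝ) ^ (n - 1) ≤ ((n : ℝ) + 1) * ((S.filter fun x => σ x = a).card : ℝ) := by
    exact_mod_cast hchain
  linarith
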